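/- Let $k$ be an $m$-orthogonal kernel supported on $[-1,1]$ with $\int_{-1}^1 k = 1$, and let $h$ be $m$ times continuously differentiable at a fixed point $x$ with continuous $m$-th derivative. If $b_n > 0$ with $b_n \to 0$, then $b_n^{-m}\left(\int_{-1}^1 k(y) h(x - b_n y)\,dy - h(x)\right) \to \frac{(-1)^m}{m!} h^{(m)}(x) \int_{-1}^1 k(y) y^m\,dy$ as $n \to \infty$. -/

import Mathlib

open MeasureTheory Filter

-- uniform Taylor estimate
lemma key (x : ℝ) : ∀ (m : ℕ) (h : ℝ → ℝ), ContDiff ℝ m h → ∀ ε > 0, ∃ δ > 0, ∀ u : ℝ, |u - x| ≤ δ →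
    |h u - ∑ j ∈ Finset.range (m+1), iteratedDeriv j h x * (u - x)^j / j.factorial| ≤ ε * |u - x|^m := by
  intro m
  induction m with
  | zero =>
    intro h hh ε hε
    have hc : ContinuousAt h x := hh.continuous.continuousAt
    rw [Metric.continuousAt_iff] at hc
    obtain ⟨δ, hδ, hd⟩ := hc ε hε
    refine ⟨δ/2, by linarith, fun u hu => ?_⟩
    have := hd (x := u) (by rw [Real.dist_eq]; linarith)
    rw [Real.dist_eq] at this
    simpa using this.le
  | succ m ih =>
    intro h hh ε hε
    have hh' : ContDiff ℝ ((m:ℕ∞) + 1) h := by exact_mod_cast hh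
    have hdiff : Differentiable ℝ h := (contDiff_succ_iff_deriv.mp hh').1
    have hder : ContDiff ℝ m (deriv h) := (contDiff_succ_iff_deriv.mp hh').2.2
    obtain ⟨δ, hδ, hIH⟩ := ih (deriv h) hder ε hε
    refine ⟨δ, hδ, fun u hu => ?_⟩
    set g : ℝ → ℝ := fun v => h v - ∑ j ∈ Finset.range (m+2), iteratedDeriv j h x * (v - x)^j / j.factorial with hg
    set G : ℝ → ℝ := fun t => deriv h t - ∑ j ∈ Finset.range (m+1), iteratedDeriv j (deriv h) x * (t - x)^j / j.factorial with hG
    have hgder : ∀ t : ℝ, HasDerivAt g (G t) t := by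
      intro t
      have h1 : HasDerivAt h (deriv h t) t := (hdiff t).hasDerivAt
      have h2 : ∀ j ∈ Finset.range (m+2), HasDerivAt (fun v : ℝ => iteratedDeriv j h x * (v - x)^j / j.factorial)
          (iteratedDeriv j h x * (j * (t - x)^(j-1)) / j.factorial) t := by
        intro j _
        have : HasDerivAt (fun v : ℝ => (v - x)^j) ((j:ℝ) * (t-x)^(j-1)) t := by
          simpa using (((hasDerivAt_id t).sub_const x).fun_pow j)
        simpa [mul_div_assoc] using (this.const_mul (iteratedDeriv j h x)).div_const (j.factorial : ℝ)
      have h3 := h1.fun_sub (HasDerivAt.fun_sum h2)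
      have hsum : (∑ j ∈ Finset.range (m+2), iteratedDeriv j h x * ((j:ℝ) * (t - x)^(j-1)) / j.factorial)
          = ∑ j ∈ Finset.range (m+1), iteratedDeriv j (deriv h) x * (t - x)^j / j.factorial := by
        rw [Finset.sum_range_succ' ]
        simp only [Nat.cast_zero, zero_mul, mul_zero, zero_div, add_zero]
        apply Finset.sum_congr rfl
        intro i _
        rw [iteratedDeriv_succ', Nat.factorial_succ]
        push_cast
        field_simp
      rw [hsum] at h3
      exact h3
    have hGbound : ∀ t ∈ Set.uIcc x u, ‖G t‖ ≤ ε * |u - x|^m := by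
      intro t ht
      have htx : |t - x| ≤ |u - x| := Set.abs_sub_left_of_mem_uIcc ht
      calc ‖G t‖ ≤ ε * |t - x|^m := hIH t (le_trans htx hu)
        _ ≤ ε * |u - x|^m := by gcongr
    have hmvt := Convex.norm_image_sub_le_of_norm_hasDerivWithin_le
      (f := g) (f' := G) (fun t ht => (hgder t).hasDerivWithinAt) hGbound (convex_uIcc x u)
      Set.left_mem_uIcc Set.right_mem_uIcc
    have hgx : g x = 0 := by
      rw [hg]
      simp only
      rw [Finset.sum_eq_single 0]
      · simp
      · intro j _ hj; simp [zero_pow hj]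
      · simp
    rw [hgx, sub_zero, Real.norm_eq_abs, Real.norm_eq_abs] at hmvt
    calc |h u - ∑ j ∈ Finset.range (m+1+1), iteratedDeriv j h x * (u - x)^j / j.factorial| = |g u| := rfl
      _ ≤ ε * |u - x|^m * |u - x| := hmvt
      _ = ε * |u - x|^(m+1) := by ring

theorem stmt1 (m : ℕ) (hm : 1 ≤ m) (k h : ℝ → ℝ) (x K : ℝ)
    (hkm : Measurable k)
    (hsupp : ∀ y, y ∉ Set.Icc (-1:ℝ) 1 → k y = 0)
    (hbdd : ∀ y, |k y| ≤ K)
    (hint : ∫ y in (-1:ℝ)..1, k y = 1)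
    (horth : ∀ j, 1 ≤ j → j < m → ∫ y in (-1:ℝ)..1, k y * y ^ j = 0)
    (hh : ContDiff ℝ m h)
    (b : ℕ → ℝ) (hbpos : ∀ n, 0 < b n) (hb0 : Tendsto b atTop (nhds 0)) :
    Tendsto (fun n => ((∫ y in (-1:ℝ)..1, k y * h (x - b n * y)) - h x) / (b n) ^ m)
      atTop
      (nhds ((-1:ℝ) ^ m / m.factorial * iteratedDeriv m h x *
        ∫ y in (-1:ℝ)..1, k y * y ^ m)) := by
  have hK0 : (0:ℝ) ≤ K := le_trans (abs_nonneg _) (hbdd 0)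
  have hii : ∀ g : ℝ → ℝ, Continuous g →
      IntervalIntegrable (fun y => k y * g y) volume (-1) 1 := by
    intro g hg
    obtain ⟨C, hC⟩ := (isCompact_uIcc (a := (-1:ℝ)) (b := 1)).exists_bound_of_continuousOn
      hg.continuousOn
    refine (intervalIntegrable_const (c := K * C) (μ := volume) (a := -1) (b := 1)).mono_fun
      ((hkm.mul hg.measurable).aestronglyMeasurable) ?_
    refine ae_restrict_of_forall_mem measurableSet_uIoc (fun y hy => ?_)
    have hy' : y ∈ Set.uIcc (-1:ℝ) 1 := Set.uIoc_subset_uIcc hy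
    have h1 : ‖g y‖ ≤ C := hC y hy'
    have h0C : (0:ℝ) ≤ C := le_trans (norm_nonneg _) h1
    calc ‖k y * g y‖ = |k y| * ‖g y‖ := by rw [Real.norm_eq_abs, abs_mul]; rfl
      _ ≤ K * C := mul_le_mul (hbdd y) h1 (norm_nonneg _) hK0
      _ ≤ ‖K * C‖ := le_abs_self _
  set d : ℕ → ℝ := fun j => iteratedDeriv j h x with hd
  set L := ∫ y in (-1:ℝ)..1, k y * y ^ m with hL
  set g : ℝ → ℝ := fun v => h v - ∑ j ∈ Finset.range (m+1), d j * (v - x)^j / j.factorial with hgdef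
  have hgcont : Continuous g := by
    apply hh.continuous.sub
    exact continuous_finset_sum _ (fun j _ => by fun_prop)
  have hsplit : ∀ n, ((∫ y in (-1:ℝ)..1, k y * h (x - b n * y)) - h x) / (b n)^m
      = (-1:ℝ)^m / m.factorial * d m * L
        + (∫ y in (-1:ℝ)..1, k y * g (x - b n * y)) / (b n)^m := by
    intro n
    have h1 : ∀ y : ℝ, k y * h (x - b n * y)
        = (∑ j ∈ Finset.range (m+1), (d j / j.factorial) * (-(b n))^j * (k y * y^j))
          + k y * g (x - b n * y) := by
      intro y
      have hgy : g (x - b n * y)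
          = h (x - b n * y) - ∑ j ∈ Finset.range (m+1), d j * ((-(b n))^j * y^j) / j.factorial := by
        simp only [hgdef]
        congr 1
        refine Finset.sum_congr rfl (fun j _ => ?_)
        rw [show x - b n * y - x = (-(b n)) * y by ring, mul_pow]
      rw [hgy, mul_sub, Finset.mul_sum]
      have hs : ∑ j ∈ Finset.range (m+1), (d j / j.factorial) * (-(b n))^j * (k y * y^j)
          = ∑ j ∈ Finset.range (m+1), k y * (d j * ((-(b n))^j * y^j) / j.factorial) :=
        Finset.sum_congr rfl (fun j _ => by ring)
      rw [hs]; ring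
    have hInt1 : ∀ j : ℕ, IntervalIntegrable (fun y => k y * y ^ j) volume (-1) 1 :=
      fun j => hii _ (continuous_pow j)
    have hIntg : IntervalIntegrable (fun y => k y * g (x - b n * y)) volume (-1) 1 :=
      hii _ (hgcont.comp (by fun_prop))
    have hIntsum : ∀ j ∈ Finset.range (m+1),
        IntervalIntegrable (fun y => (d j / j.factorial) * (-(b n))^j * (k y * y^j)) volume (-1) 1 :=
      fun j _ => (hInt1 j).const_mul _
    rw [show (∫ y in (-1:ℝ)..1, k y * h (x - b n * y))
        = ∫ y in (-1:ℝ)..1, ((∑ j ∈ Finset.range (m+1), (d j / j.factorial) * (-(b n))^j * (k y * y^j))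
          + k y * g (x - b n * y)) from intervalIntegral.integral_congr (fun y _ => h1 y)]
    have hIntS : IntervalIntegrable (fun y => ∑ j ∈ Finset.range (m+1),
        (d j / j.factorial) * (-(b n))^j * (k y * y^j)) volume (-1) 1 := by
      have := IntervalIntegrable.sum (Finset.range (m+1)) hIntsum
      simpa [Finset.sum_fn] using this
    rw [intervalIntegral.integral_add hIntS hIntg,
      intervalIntegral.integral_finset_sum hIntsum]
    simp only [intervalIntegral.integral_const_mul]
    have hsum : ∑ j ∈ Finset.range (m+1),
        (d j / j.factorial) * (-(b n))^j * (∫ y in (-1:ℝ)..1, k y * y^j)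
        = h x + (d m / m.factorial) * (-(b n))^m * L := by
      rw [Finset.sum_range_succ]
      have hzero : ∑ j ∈ Finset.range m,
          (d j / j.factorial) * (-(b n))^j * (∫ y in (-1:ℝ)..1, k y * y^j) = h x := by
        rw [Finset.sum_eq_single_of_mem 0 (Finset.mem_range.mpr hm)]
        · have : (∫ y in (-1:ℝ)..1, k y * y^(0:ℕ)) = 1 := by
            simpa using hint
          simp [this, hd, iteratedDeriv_zero, hint]
        · intro j hj hj0
          rw [horth j (Nat.one_le_iff_ne_zero.mpr hj0) (Finset.mem_range.mp hj)]
          ring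
      rw [hzero, hL]
    rw [hsum]
    have hbn : (0:ℝ) < (b n)^m := pow_pos (hbpos n) m
    rw [neg_pow]
    field_simp
    ring
  have hE : Tendsto (fun n => (∫ y in (-1:ℝ)..1, k y * g (x - b n * y)) / (b n)^m)
      atTop (nhds 0) := by
    rw [NormedAddCommGroup.tendsto_nhds_zero]
    intro ε hε
    set ε' := ε / (2*K+1) with hε'
    have hε'pos : 0 < ε' := div_pos hε (by linarith)
    obtain ⟨δ, hδ, hkey⟩ := key x m h hh ε' hε'pos
    filter_upwards [hb0.eventually (gt_mem_nhds hδ)] with n hn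
    have hbn := hbpos n
    have hnorm : ‖∫ y in (-1:ℝ)..1, k y * g (x - b n * y)‖ ≤ (K * (ε' * (b n)^m)) * |1 - (-1:ℝ)| := by
      apply intervalIntegral.norm_integral_le_of_norm_le_const
      intro y hy
      have hy1 : |y| ≤ 1 := by
        rw [Set.uIoc_of_le (by norm_num : (-1:ℝ) ≤ 1)] at hy
        rw [abs_le]; exact ⟨hy.1.le, hy.2⟩
      have habs : |x - b n * y - x| = b n * |y| := by
        rw [show x - b n * y - x = -(b n * y) by ring, abs_neg, abs_mul, abs_of_pos hbn]
      have hdist : |x - b n * y - x| ≤ δ := by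
        rw [habs]; nlinarith
      have h2 : |g (x - b n * y)| ≤ ε' * |x - b n * y - x|^m := by
        have := hkey _ hdist
        simpa only [hgdef, hd] using this
      rw [Real.norm_eq_abs, abs_mul]
      calc |k y| * |g (x - b n * y)| ≤ K * (ε' * |x - b n * y - x|^m) :=
            mul_le_mul (hbdd y) h2 (abs_nonneg _) hK0
        _ ≤ K * (ε' * (b n)^m) := by
            have h3 : |x - b n * y - x| ≤ b n := by rw [habs]; nlinarith
            have h4 : |x - b n * y - x|^m ≤ (b n)^m := pow_le_pow_left₀ (abs_nonneg _) h3 m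
            gcongr

    have hbound : ‖(∫ y in (-1:ℝ)..1, k y * g (x - b n * y)) / (b n)^m‖ ≤ 2*K*ε' := by
      rw [norm_div, norm_pow]
      simp only [Real.norm_eq_abs]
      rw [abs_of_pos hbn, div_le_iff₀ (pow_pos hbn m)]
      calc ‖∫ y in (-1:ℝ)..1, k y * g (x - b n * y)‖
          ≤ (K * (ε' * (b n)^m)) * |1 - (-1:ℝ)| := hnorm
        _ = 2*K*ε' * (b n)^m := by norm_num; ring
    refine lt_of_le_of_lt hbound ?_
    calc 2*K*ε' = ε * (2*K/(2*K+1)) := by rw [hε']; ring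
      _ < ε * 1 := by
          apply mul_lt_mul_of_pos_left _ hε
          rw [div_lt_one (by linarith)]
          linarith
      _ = ε := mul_one ε
  have hfinal := (tendsto_const_nhds (x := (-1:ℝ)^m / m.factorial * d m * L)
    (f := atTop (α := ℕ))).add hE
  rw [add_zero] at hfinal
  exact hfinal.congr (fun n => (hsplit n).symm)
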